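/- Let Z be a positive random variable with E[Z] < ∞ and continuous distribution, 0 < γ < B, x₀ > 0. Define H_0(y) = P(Z ≤ y), H_1(y) = E[Z·1_{Z ≤ y}], and for δ in the feasible range define L(δ) = (B−γ)H_0(δ) + γ H_0(H_1^{−1}((x₀ − (B−γ)H_1(δ))/γ)). Then L is strictly monotonically increasing in δ on the interval where the inner expression lies in the range of H_1; specifically, for δ₂ < δ₁ in this interval, L(δ₁) − L(δ₂) ≥ (B−γ)·(ρ₁/(δ₁+ρ₁))·E[1_{δ₂ ≤ Z ≤ δ₁}] where δ₁ + ρ₁ = H_1^{−1}((x₀ − (B−γ)H_1(δ₁))/γ). -/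

import Mathlib

open MeasureTheory ProbabilityTheory Real

/-- Monotonicity of `L(δ) = (B-γ)H₀(δ) + γ H₀(H₁⁻¹((x₀ - (B-γ)H₁(δ))/γ))` along the
budget constraint: writing `δᵢ + ρᵢ = H₁⁻¹((x₀ - (B-γ)H₁(δᵢ))/γ)` (i.e. `ρᵢ > 0`
satisfies `H₁(δᵢ + ρᵢ) = (x₀ - (B-γ)H₁(δᵢ))/γ`), for `δ₂ < δ₁` one has
`L(δ₁) - L(δ₂) ≥ (B-γ)(ρ₁/(δ₁+ρ₁)) E[1_{δ₂ ≤ Z ≤ δ₁}]`. -/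
theorem stmt_18 {Ω : Type*} [MeasureSpace Ω] [IsProbabilityMeasure (ℙ : Measure Ω)]
    (Z : Ω → ℝ) (hZm : Measurable Z) (hZpos : ∀ ω, 0 < Z ω) (hZint : Integrable Z)
    (hcont : ∀ c : ℝ, ℙ {ω | Z ω = c} = 0)
    (γ B x₀ : ℝ) (hγ : 0 < γ) (hB : γ < B) (hx₀ : 0 < x₀)
    (H₀ H₁ : ℝ → ℝ)
    (hH₀ : ∀ y, H₀ y = (ℙ {ω | Z ω ≤ y}).toReal)
    (hH₁ : ∀ y, H₁ y = ∫ ω, if Z ω ≤ y then Z ω else 0)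
    (δ₁ δ₂ ρ₁ ρ₂ : ℝ) (hδ₂0 : 0 ≤ δ₂) (hδ : δ₂ < δ₁) (hρ₁ : 0 < ρ₁) (hρ₂ : 0 < ρ₂)
    (hbud₁ : H₁ (δ₁ + ρ₁) = (x₀ - (B - γ) * H₁ δ₁) / γ)
    (hbud₂ : H₁ (δ₂ + ρ₂) = (x₀ - (B - γ) * H₁ δ₂) / γ) :
    (B - γ) * (ρ₁ / (δ₁ + ρ₁)) * (ℙ {ω | δ₂ ≤ Z ω ∧ Z ω ≤ δ₁}).toReal ≤
      ((B - γ) * H₀ δ₁ + γ * H₀ (δ₁ + ρ₁)) - ((B - γ) * H₀ δ₂ + γ * H₀ (δ₂ + ρ₂)) := by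
  have hγ0 : γ ≠ 0 := ne_of_gt hγ
  have hδ₁0 : 0 < δ₁ := lt_of_le_of_lt hδ₂0 hδ
  set a := δ₁ + ρ₁ with ha_def
  set b := δ₂ + ρ₂ with hb_def
  have ha0 : 0 < a := by rw [ha_def]; linarith
  have hb0 : 0 < b := by rw [hb_def]; linarith
  have msLe : ∀ y : ℝ, MeasurableSet {ω | Z ω ≤ y} := fun y => hZm measurableSet_Iic
  have msIoc : ∀ u v : ℝ, MeasurableSet {ω | u < Z ω ∧ Z ω ≤ v} := fun u v =>
    hZm measurableSet_Ioc
  have intLe : ∀ y : ℝ, Integrable (fun ω => if Z ω ≤ y then Z ω else 0) := by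
    intro y
    have h := hZint.indicator (msLe y)
    have heq : (fun ω => if Z ω ≤ y then Z ω else 0) = Set.indicator {ω | Z ω ≤ y} Z := by
      funext ω; simp [Set.indicator_apply, Set.mem_setOf_eq]
    rw [heq]; exact h
  have intIoc : ∀ u v : ℝ, Integrable (fun ω => if u < Z ω ∧ Z ω ≤ v then Z ω else 0) := by
    intro u v
    have heq : (fun ω => if u < Z ω ∧ Z ω ≤ v then Z ω else 0)
        = Set.indicator {ω | u < Z ω ∧ Z ω ≤ v} Z := by
      funext ω; simp [Set.indicator_apply, Set.mem_setOf_eq]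
    rw [heq]; exact hZint.indicator (msIoc u v)
  have intConstI : ∀ c u v : ℝ, Integrable (fun ω => if u < Z ω ∧ Z ω ≤ v then c else 0) := by
    intro c u v
    have heq : (fun ω => if u < Z ω ∧ Z ω ≤ v then c else 0)
        = Set.indicator {ω | u < Z ω ∧ Z ω ≤ v} (fun _ => c) := by
      funext ω; simp [Set.indicator_apply, Set.mem_setOf_eq]
    rw [heq]; exact (integrable_const (μ := (ℙ : Measure Ω)) c).indicator (msIoc u v)
  have intConst : ∀ c u v : ℝ, (∫ ω, if u < Z ω ∧ Z ω ≤ v then c else 0) =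
      c * (ℙ {ω | u < Z ω ∧ Z ω ≤ v}).toReal := by
    intro c u v
    have h1 : (fun ω => if u < Z ω ∧ Z ω ≤ v then c else 0)
        = Set.indicator {ω | u < Z ω ∧ Z ω ≤ v} (fun _ => c) := by
      funext ω; simp [Set.indicator_apply, Set.mem_setOf_eq]
    rw [h1, integral_indicator_const c (msIoc u v), smul_eq_mul, mul_comm]; rfl
  have H1diff : ∀ u v : ℝ, u ≤ v →
      H₁ v - H₁ u = ∫ ω, (if u < Z ω ∧ Z ω ≤ v then Z ω else 0) := by
    intro u v huv
    rw [hH₁, hH₁]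
    have hsplit : (fun ω => if Z ω ≤ v then Z ω else 0)
        = (fun ω => (if Z ω ≤ u then Z ω else 0) + (if u < Z ω ∧ Z ω ≤ v then Z ω else 0)) := by
      funext ω
      rcases le_or_gt (Z ω) u with h | h
      · simp [h, h.trans huv, not_lt.mpr h]
      · rcases le_or_gt (Z ω) v with h' | h'
        · simp [h', not_le.mpr h, h]
        · simp [not_le.mpr h', not_le.mpr h]
    rw [hsplit, integral_add (intLe u) (intIoc u v)]
    ring
  have upper : ∀ u v : ℝ, 0 ≤ v →
      (∫ ω, if u < Z ω ∧ Z ω ≤ v then Z ω else 0) ≤ v * (ℙ {ω | u < Z ω ∧ Z ω ≤ v}).toReal := by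
    intro u v hv
    rw [← intConst v u v]
    apply integral_mono (intIoc u v) (intConstI v u v)
    intro ω; dsimp only; split_ifs with h
    · exact h.2
    · exact le_rfl
  have lower : ∀ u v : ℝ, 0 ≤ u →
      u * (ℙ {ω | u < Z ω ∧ Z ω ≤ v}).toReal ≤ ∫ ω, if u < Z ω ∧ Z ω ≤ v then Z ω else 0 := by
    intro u v hu
    rw [← intConst u u v]
    apply integral_mono (intConstI u u v) (intIoc u v)
    intro ω; dsimp only; split_ifs with h
    · exact h.1.le
    · exact le_rfl
  have H0diff : ∀ u v : ℝ, u ≤ v →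
      (ℙ {ω | Z ω ≤ v}).toReal - (ℙ {ω | Z ω ≤ u}).toReal
        = (ℙ {ω | u < Z ω ∧ Z ω ≤ v}).toReal := by
    intro u v huv
    have hunion : {ω | Z ω ≤ v} = {ω | Z ω ≤ u} ∪ {ω | u < Z ω ∧ Z ω ≤ v} := by
      ext ω
      simp only [Set.mem_setOf_eq, Set.mem_union]
      constructor
      · intro h
        rcases le_or_gt (Z ω) u with h' | h'
        exacts [Or.inl h', Or.inr ⟨h', h⟩]
      · rintro (h | ⟨_, h⟩)
        exacts [h.trans huv, h]
    have hdisj : Disjoint {ω | Z ω ≤ u} {ω | u < Z ω ∧ Z ω ≤ v} := by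
      rw [Set.disjoint_left]
      rintro ω h ⟨h', _⟩
      exact absurd h (not_le.mpr h')
    rw [hunion, measure_union hdisj (msIoc u v),
      ENNReal.toReal_add (measure_ne_top _ _) (measure_ne_top _ _)]
    ring
  have hPP : ℙ {ω | δ₂ ≤ Z ω ∧ Z ω ≤ δ₁} = ℙ {ω | δ₂ < Z ω ∧ Z ω ≤ δ₁} := by
    apply le_antisymm
    · calc ℙ {ω | δ₂ ≤ Z ω ∧ Z ω ≤ δ₁}
          ≤ ℙ ({ω | δ₂ < Z ω ∧ Z ω ≤ δ₁} ∪ {ω | Z ω = δ₂}) := by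
            apply measure_mono
            rintro ω ⟨h1, h2⟩
            rcases eq_or_lt_of_le h1 with h | h
            exacts [Or.inr h.symm, Or.inl ⟨h, h2⟩]
      _ ≤ ℙ {ω | δ₂ < Z ω ∧ Z ω ≤ δ₁} + ℙ {ω | Z ω = δ₂} := measure_union_le _ _
      _ = ℙ {ω | δ₂ < Z ω ∧ Z ω ≤ δ₁} := by rw [hcont δ₂, add_zero]
    · exact measure_mono fun ω h => ⟨h.1.le, h.2⟩
  have e1 : γ * H₁ a = x₀ - (B - γ) * H₁ δ₁ := by rw [hbud₁]; field_simp
  have e2 : γ * H₁ b = x₀ - (B - γ) * H₁ δ₂ := by rw [hbud₂]; field_simp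
  have hBsub : γ * (H₁ b - H₁ a) = (B - γ) * (H₁ δ₁ - H₁ δ₂) := by linear_combination e2 - e1
  set P := (ℙ {ω | δ₂ < Z ω ∧ Z ω ≤ δ₁}).toReal with hPdef
  have hPn : 0 ≤ P := ENNReal.toReal_nonneg
  have hDeq : (ℙ {ω | Z ω ≤ δ₁}).toReal - (ℙ {ω | Z ω ≤ δ₂}).toReal = P := H0diff δ₂ δ₁ hδ.le
  have hH1d : H₁ δ₁ - H₁ δ₂ ≤ δ₁ * P := by
    rw [H1diff δ₂ δ₁ hδ.le]
    exact upper δ₂ δ₁ hδ₁0.le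
  have key : γ * ((ℙ {ω | Z ω ≤ b}).toReal - (ℙ {ω | Z ω ≤ a}).toReal)
      ≤ (B - γ) * (δ₁ / a) * P := by
    rcases le_or_gt b a with hba | hab
    · have h1 : (ℙ {ω | Z ω ≤ b}).toReal ≤ (ℙ {ω | Z ω ≤ a}).toReal :=
        ENNReal.toReal_mono (measure_ne_top _ _) (measure_mono fun ω h => h.trans hba)
      have h2 : 0 ≤ (B - γ) * (δ₁ / a) * P :=
        mul_nonneg (mul_nonneg (by linarith) (by positivity)) hPn
      nlinarith [mul_nonneg hγ.le (sub_nonneg.mpr h1)]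
    · have hQ : (ℙ {ω | Z ω ≤ b}).toReal - (ℙ {ω | Z ω ≤ a}).toReal
          = (ℙ {ω | a < Z ω ∧ Z ω ≤ b}).toReal := H0diff a b hab.le
      set Q := (ℙ {ω | a < Z ω ∧ Z ω ≤ b}).toReal with hQdef
      have hlow : a * Q ≤ H₁ b - H₁ a := by
        rw [H1diff a b hab.le]
        exact lower a b ha0.le
      have hchain : γ * (a * Q) ≤ (B - γ) * (δ₁ * P) := by
        calc γ * (a * Q) ≤ γ * (H₁ b - H₁ a) := by
              exact mul_le_mul_of_nonneg_left hlow hγ.le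
          _ = (B - γ) * (H₁ δ₁ - H₁ δ₂) := hBsub
          _ ≤ (B - γ) * (δ₁ * P) := mul_le_mul_of_nonneg_left hH1d (by linarith)
      rw [hQ]
      have h1 : γ * Q = γ * (a * Q) / a := by field_simp
      have h2 : (B - γ) * (δ₁ / a) * P = (B - γ) * (δ₁ * P) / a := by ring
      rw [h1, h2]
      gcongr
  rw [hPP, ← hPdef]
  simp only [hH₀]
  have hfrac : ρ₁ / a + δ₁ / a = 1 := by
    rw [← add_div, ha_def, add_comm, div_self (ne_of_gt ha0)]
  have hsum : (B - γ) * (ρ₁ / a) * P + (B - γ) * (δ₁ / a) * P = (B - γ) * P := by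
    linear_combination (B - γ) * P * hfrac
  have hDeq' : (B - γ) * (ℙ {ω | Z ω ≤ δ₁}).toReal - (B - γ) * (ℙ {ω | Z ω ≤ δ₂}).toReal
      = (B - γ) * P := by linear_combination (B - γ) * hDeq
  linarith [key, hDeq', hsum]
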